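/- Let c₁, c₂, r₁ be real numbers and define D(t) = (c₁ + c₂t)·e^{r₁t} for t ∈ [0,∞). Then D is a discount function if and only if c₁ = 1, r₁ < 0, and 0 ≤ c₂ ≤ −r₁. -/

import Mathlib

def IsDiscount (D : ℝ → ℝ) : Prop :=
  D 0 = 1 ∧ (∀ t, 0 ≤ t → 0 < D t) ∧ StrictAntiOn D (Set.Ici 0) ∧
    Filter.Tendsto D Filter.atTop (nhds 0)

open Filter Topology Real

private lemma aux_hasDeriv (c₂ r₁ t : ℝ) :
    HasDerivAt (fun t => (1 + c₂ * t) * Real.exp (r₁ * t))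
      ((c₂ + r₁ * (1 + c₂ * t)) * Real.exp (r₁ * t)) t := by
  have h1 : HasDerivAt (fun t : ℝ => 1 + c₂ * t) c₂ t := by
    simpa using ((hasDerivAt_id t).const_mul c₂).const_add 1
  have h2 : HasDerivAt (fun t : ℝ => Real.exp (r₁ * t)) (Real.exp (r₁ * t) * r₁) t := by
    simpa using ((hasDerivAt_id t).const_mul r₁).exp
  have := (h1.mul h2 : HasDerivAt (fun t => (1 + c₂ * t) * Real.exp (r₁ * t)) _ t)
  exact this.congr_deriv (by ring)

theorem linear_times_exp_discount (c₁ c₂ r₁ : ℝ) :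
    IsDiscount (fun t => (c₁ + c₂ * t) * Real.exp (r₁ * t)) ↔
      c₁ = 1 ∧ r₁ < 0 ∧ 0 ≤ c₂ ∧ c₂ ≤ -r₁ := by
  constructor
  · rintro ⟨h0, hpos, hanti, hlim⟩
    have hc₁ : c₁ = 1 := by simpa using h0
    subst hc₁
    have hc₂ : 0 ≤ c₂ := by
      by_contra h
      push_neg at h
      have ht : (0:ℝ) ≤ -2 / c₂ := by rw [div_nonneg_iff]; right; constructor <;> linarith
      have hP := hpos (-2 / c₂) ht
      simp only at hP
      have hlin : 0 < 1 + c₂ * (-2 / c₂) := by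
        rcases mul_pos_iff.mp hP with ⟨h1, _⟩ | ⟨_, h2⟩
        · exact h1
        · exact absurd h2 (not_lt.mpr (Real.exp_pos _).le)
      have hx : c₂ * (-2 / c₂) = -2 := by rw [mul_comm, div_mul_cancel₀ _ h.ne]
      linarith
    have hr₁ : r₁ < 0 := by
      by_contra h
      push_neg at h
      have : ∀ᶠ t in atTop, (1 + c₂ * t) * Real.exp (r₁ * t) < 1/2 := by
        have := hlim
        rw [Metric.tendsto_nhds] at this
        filter_upwards [this (1/2) (by norm_num), eventually_ge_atTop (0:ℝ)] with t h1 h2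
        rw [Real.dist_eq, abs_sub_lt_iff] at h1
        linarith [h1.1]
      obtain ⟨t, ht, ht0⟩ := (this.and (eventually_ge_atTop (0:ℝ))).exists
      have h1 : (1:ℝ) ≤ 1 + c₂ * t := by nlinarith
      have h2 : (1:ℝ) ≤ Real.exp (r₁ * t) := by
        rw [← Real.exp_zero]
        exact Real.exp_le_exp.mpr (by nlinarith)
      nlinarith
    refine ⟨rfl, hr₁, hc₂, ?_⟩
    -- slope argument: derivative at 0 is c₂ + r₁ ≤ 0
    have hf : HasDerivAt (fun t => (1 + c₂ * t) * Real.exp (r₁ * t)) (c₂ + r₁) 0 := by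
      simpa using aux_hasDeriv c₂ r₁ 0
    have hslope := hasDerivAt_iff_tendsto_slope.mp hf
    have hres : Tendsto (slope (fun t => (1 + c₂ * t) * Real.exp (r₁ * t)) 0) (𝓝[>] 0)
        (𝓝 (c₂ + r₁)) :=
      hslope.mono_left (nhdsWithin_mono _ (fun x hx => ne_of_gt hx))
    have hle : c₂ + r₁ ≤ 0 := by
      refine le_of_tendsto hres ?_
      filter_upwards [self_mem_nhdsWithin] with t ht
      have ht' : (0:ℝ) < t := ht
      have hlt : (1 + c₂ * t) * Real.exp (r₁ * t) < 1 := by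
        have := hanti (Set.self_mem_Ici) (Set.mem_Ici.mpr ht'.le) ht'
        simpa using this
      rw [slope_def_field]
      have : ((1 + c₂ * t) * Real.exp (r₁ * t) - (1 + c₂ * 0) * Real.exp (r₁ * 0)) / (t - 0) ≤ 0 := by
        apply div_nonpos_of_nonpos_of_nonneg
        · simp only [mul_zero, add_zero, Real.exp_zero, mul_one]
          linarith
        · linarith
      simpa [div_eq_iff, sub_div] using this
    linarith
  · rintro ⟨hc₁, hr₁, hc₂, hle⟩
    subst hc₁
    refine ⟨by simp, ?_, ?_, ?_⟩
    · intro t ht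
      have : (0:ℝ) < 1 + c₂ * t := by nlinarith
      positivity
    · apply strictAntiOn_of_deriv_neg (convex_Ici 0)
      · exact Continuous.continuousOn (by continuity)
      · intro t ht
        rw [interior_Ici] at ht
        have ht' : (0:ℝ) < t := ht
        rw [(aux_hasDeriv c₂ r₁ t).deriv]
        apply mul_neg_of_neg_of_pos _ (Real.exp_pos _)
        rcases eq_or_lt_of_le hc₂ with h | h
        · rw [← h]
          simpa using hr₁
        · nlinarith [mul_pos h ht', mul_neg_of_neg_of_pos hr₁ (mul_pos h ht')]
    · have hR : (0:ℝ) < -r₁ := by linarith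
      have hcomp : Tendsto (fun t : ℝ => -r₁ * t) atTop atTop :=
        Tendsto.const_mul_atTop hR tendsto_id
      have hg : Tendsto (fun s : ℝ => Real.exp (-s) + (-c₂/r₁) * (s * Real.exp (-s)))
          atTop (𝓝 0) := by
        have h1 : Tendsto (fun s : ℝ => Real.exp (-s)) atTop (𝓝 0) :=
          Real.tendsto_exp_neg_atTop_nhds_zero
        have h2 : Tendsto (fun s : ℝ => s * Real.exp (-s)) atTop (𝓝 0) := by
          simpa using Real.tendsto_pow_mul_exp_neg_atTop_nhds_zero 1
        simpa using h1.add (h2.const_mul (-c₂/r₁))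
      have := hg.comp hcomp
      convert this using 2 with t
      simp only [Function.comp_apply, neg_mul, neg_neg]
      field_simp [hr₁.ne]
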